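/- Let W be a nonempty finite set and R a surjective relation on W. Then R can be covered by finitely many bi-infinite R-chains: there exist finitely many bi-infinite sequences, each of which is an R-chain eventually periodic at both ends, such that every pair (a,b) ∈ R occurs as a consecutive pair (aᵢ, aᵢ₊₁) in one of these chains. -/

import Mathlib

/-- A relation `R ⊆ W × W` is surjective when both coordinate projections
restricted to `R` are onto `W`. -/
def IsSurjRel {W : Type*} (R : Set (W × W)) : Prop :=
  (∀ a : W, ∃ b : W, (a, b) ∈ R) ∧ (∀ b : W, ∃ a : W, (a, b) ∈ R)

lemma iterate_eventually_periodic {W : Type*} [Finite W] (f : W → W) (b : W) :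
    ∃ k p : ℕ, 1 ≤ p ∧ ∀ n : ℕ, k ≤ n → f^[n + p] b = f^[n] b := by
  obtain ⟨k, l, hne, heq⟩ := Finite.exists_ne_map_eq_of_infinite (fun n : ℕ => f^[n] b)
  rcases lt_or_gt_of_ne hne with h | h
  · refine ⟨k, l - k, by omega, fun n hn => ?_⟩
    have h1 : n + (l - k) = (n - k) + l := by omega
    have h2 : (n - k) + k = n := by omega
    rw [h1, Function.iterate_add_apply, ← heq, ← Function.iterate_add_apply, h2]
  · refine ⟨l, k - l, by omega, fun n hn => ?_⟩
    have h1 : n + (k - l) = (n - l) + k := by omega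
    have h2 : (n - l) + l = n := by omega
    rw [h1, Function.iterate_add_apply, heq, ← Function.iterate_add_apply, h2]

theorem stmt_6 {W : Type*} [Finite W] [Nonempty W] (R : Set (W × W)) (hR : IsSurjRel R) :
    ∃ (m : ℕ) (c : Fin m → ℤ → W),
      (∀ j : Fin m, ∀ i : ℤ, (c j i, c j (i + 1)) ∈ R) ∧
      (∀ j : Fin m, ∃ N p : ℤ, 1 ≤ p ∧ ∀ i : ℤ, N ≤ i → c j (i + p) = c j i) ∧
      (∀ j : Fin m, ∃ N p : ℤ, 1 ≤ p ∧ ∀ i : ℤ, i ≤ N → c j (i - p) = c j i) ∧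
      (∀ q ∈ R, ∃ (j : Fin m) (i : ℤ), c j i = q.1 ∧ c j (i + 1) = q.2) := by
  classical
  obtain ⟨h1, h2⟩ := hR
  choose f hf using h1
  choose g hg using h2
  set chain : W × W → ℤ → W :=
    fun q i => if i ≤ 0 then g^[(-i).toNat] q.1 else f^[(i - 1).toNat] q.2 with hchain
  have e := (Finite.equivFin ↥R)
  refine ⟨Nat.card ↥R, fun j => chain (e.symm j).val, ?_, ?_, ?_, ?_⟩
  · intro j i
    set q := (e.symm j).val with hq
    rcases le_or_gt i (-1) with h | h
    · have hi : i ≤ 0 := by omega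
      have hi1 : i + 1 ≤ 0 := by omega
      have hn : (-i).toNat = (-(i + 1)).toNat + 1 := by omega
      simp only [hchain, if_pos hi, if_pos hi1, hn, Function.iterate_succ_apply']
      exact hg _
    rcases eq_or_lt_of_le (by omega : (0 : ℤ) ≤ i) with h0 | h0
    · simp only [hchain, ← h0]
      norm_num
    · have hi : ¬ i ≤ 0 := by omega
      have hi1 : ¬ i + 1 ≤ 0 := by omega
      have hn : (i + 1 - 1).toNat = (i - 1).toNat + 1 := by omega
      simp only [hchain, if_neg hi, if_neg hi1, hn, Function.iterate_succ_apply']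
      exact hf _
  · intro j
    obtain ⟨k, p, hp, hper⟩ := iterate_eventually_periodic f (e.symm j).val.2
    refine ⟨(k : ℤ) + 1, (p : ℤ), by exact_mod_cast hp, fun i hi => ?_⟩
    have hi1 : ¬ i ≤ 0 := by omega
    have hi2 : ¬ i + (p : ℤ) ≤ 0 := by omega
    have hn : (i + (p : ℤ) - 1).toNat = (i - 1).toNat + p := by omega
    simp only [hchain, if_neg hi1, if_neg hi2, hn]
    exact hper _ (by omega)
  · intro j
    obtain ⟨k, p, hp, hper⟩ := iterate_eventually_periodic g (e.symm j).val.1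
    refine ⟨-(k : ℤ), (p : ℤ), by exact_mod_cast hp, fun i hi => ?_⟩
    have hi1 : i ≤ 0 := by omega
    have hi2 : i - (p : ℤ) ≤ 0 := by omega
    have hn : (-(i - (p : ℤ))).toNat = (-i).toNat + p := by omega
    simp only [hchain, if_pos hi1, if_pos hi2, hn]
    exact hper _ (by omega)
  · intro q hq
    refine ⟨e ⟨q, hq⟩, 0, ?_, ?_⟩ <;> simp [hchain] <;> erw [Equiv.symm_apply_apply]
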